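/- Let k₁ ∈ ℂ with Re(k₁) ≠ 0, p, r, σ, μ, λ ∈ ℝ with μ+λ ≠ 0 and 2/σ + 4p²r²/|p²+k₁²|² > 0 and p ≠ 0, p² + k₁² ≠ 0. Define η₁ = k₁ x + ((μ+λ)/k₁) t + η₁₀, a = 1/((k₁+conj k₁)² (2/σ + 4p²r²/|p²+k₁²|²)), g₁ = e^{η₁}, f = 1 + a e^{η₁ + conj η₁}. Then the bilinear equation D_x D_t (g₁·f) = (μ+λ) g₁ f holds identically in (x,t). -/

import Mathlib

private lemma dexp_lin (A B : ℂ) (s : ℝ) :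
    HasDerivAt (fun s : ℝ => Complex.exp (A * s + B))
      (A * Complex.exp (A * s + B)) s := by
  have h0 : HasDerivAt (fun s : ℝ => (s : ℂ)) 1 s := Complex.ofRealCLM.hasDerivAt
  have h1 : HasDerivAt (fun s : ℝ => A * (s : ℂ) + B) A s := by
    simpa using (h0.const_mul A).add_const B
  simpa [mul_comm] using h1.cexp

private lemma deriv_exp_lin (A B : ℂ) (s : ℝ) :
    deriv (fun s : ℝ => Complex.exp (A * s + B)) s = A * Complex.exp (A * s + B) :=
  (dexp_lin A B s).deriv

private lemma deriv_mul_exp_lin (D A B : ℂ) (s : ℝ) :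
    deriv (fun s : ℝ => D * Complex.exp (A * s + B)) s
      = D * (A * Complex.exp (A * s + B)) := by
  simpa [mul_comm, mul_left_comm] using ((dexp_lin A B s).const_mul D).deriv

private lemma deriv_one_add_mul_exp_lin (D A B : ℂ) (s : ℝ) :
    deriv (fun s : ℝ => 1 + D * Complex.exp (A * s + B)) s
      = D * (A * Complex.exp (A * s + B)) := by
  simpa [mul_comm, mul_left_comm] using (((dexp_lin A B s).const_mul D).const_add 1).deriv

/-- The Hirota bilinear operator `D_x D_t (g·f) = g_{xt} f - g_x f_t - g_t f_x + g f_{xt}`. -/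
noncomputable def hirotaDxDt (g f : ℝ → ℝ → ℂ) (x t : ℝ) : ℂ :=
  deriv (fun x' => deriv (fun t' => g x' t') t) x * f x t
  - deriv (fun x' => g x' t) x * deriv (fun t' => f x t') t
  - deriv (fun t' => g x t') t * deriv (fun x' => f x' t) x
  + g x t * deriv (fun x' => deriv (fun t' => f x' t') t) x

/-- One-soliton verification of the first bilinear equation:
with `η₁ = k₁ x + ((μ+λ)/k₁) t + η₁₀`, `a = 1/((k₁+conj k₁)² (2/σ + 4p²r²/|p²+k₁²|²))`,
`g₁ = e^{η₁}`, `f = 1 + a e^{η₁ + conj η₁}`, one has `D_x D_t (g₁·f) = (μ+λ) g₁ f`. -/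
theorem stmt4 (k₁ η₁₀ : ℂ) (p r σ μ lam : ℝ)
    (hk : k₁.re ≠ 0) (hml : μ + lam ≠ 0) (hp : p ≠ 0)
    (hpk : (p : ℂ) ^ 2 + k₁ ^ 2 ≠ 0)
    (C : ℝ) (hC : C = 2 / σ + 4 * p ^ 2 * r ^ 2 / ‖(p : ℂ) ^ 2 + k₁ ^ 2‖ ^ 2)
    (hCpos : 0 < C)
    (a : ℂ) (ha : a = 1 / ((k₁ + (starRingEnd ℂ) k₁) ^ 2 * (C : ℂ)))
    (η₁ : ℝ → ℝ → ℂ)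
    (hη : ∀ x t : ℝ, η₁ x t = k₁ * x + (((μ + lam : ℝ) : ℂ) / k₁) * t + η₁₀)
    (g₁ f : ℝ → ℝ → ℂ)
    (hg₁ : ∀ x t : ℝ, g₁ x t = Complex.exp (η₁ x t))
    (hf : ∀ x t : ℝ, f x t = 1 + a * Complex.exp (η₁ x t + (starRingEnd ℂ) (η₁ x t))) :
    ∀ x t : ℝ, hirotaDxDt g₁ f x t = ((μ + lam : ℝ) : ℂ) * g₁ x t * f x t := by
  intro x t
  have hk₁ : k₁ ≠ 0 := fun h => hk (by simp [h])
  set c : ℂ := ((μ + lam : ℝ) : ℂ) / k₁ with hc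
  set K : ℂ := k₁ + (starRingEnd ℂ) k₁ with hK
  set M : ℂ := c + (starRingEnd ℂ) c with hM
  set N : ℂ := η₁₀ + (starRingEnd ℂ) η₁₀ with hN
  have hkc : k₁ * c = ((μ + lam : ℝ) : ℂ) := mul_div_cancel₀ _ hk₁
  -- conjugate of η₁
  have hconj : ∀ x t : ℝ, (starRingEnd ℂ) (η₁ x t)
      = (starRingEnd ℂ) k₁ * x + (starRingEnd ℂ) c * t + (starRingEnd ℂ) η₁₀ := by
    intro x t
    rw [hη]
    simp [map_add, map_mul, Complex.conj_ofReal]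
  -- abbreviations for the exponentials
  set G : ℂ := Complex.exp (k₁ * x + c * t + η₁₀) with hG
  set E : ℂ := Complex.exp (K * x + M * t + N) with hE
  have hgval : g₁ x t = G := by rw [hg₁, hη]
  have hfval : f x t = 1 + a * E := by
    rw [hf, hconj x t, hη x t, hE, hK, hM, hN]; congr 2; ring
  -- derivatives of g₁
  have hgx : deriv (fun x' => g₁ x' t) x = k₁ * G := by
    have : (fun x' : ℝ => g₁ x' t) = fun x' : ℝ => Complex.exp (k₁ * x' + (c * t + η₁₀)) := by
      funext x'; rw [hg₁, hη]; ring_nf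
    rw [this, deriv_exp_lin, hG]; ring_nf
  have hgt : deriv (fun t' => g₁ x t') t = c * G := by
    have : (fun t' : ℝ => g₁ x t') = fun t' : ℝ => Complex.exp (c * t' + (k₁ * x + η₁₀)) := by
      funext t'; rw [hg₁, hη]; ring_nf
    rw [this, deriv_exp_lin, hG]; ring_nf
  have hgxt : deriv (fun x' => deriv (fun t' => g₁ x' t') t) x = k₁ * c * G := by
    have h1 : (fun x' : ℝ => deriv (fun t' => g₁ x' t') t)
        = fun x' : ℝ => c * Complex.exp (k₁ * x' + (c * t + η₁₀)) := by
      funext x'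
      have : (fun t' : ℝ => g₁ x' t') = fun t' : ℝ => Complex.exp (c * t' + (k₁ * x' + η₁₀)) := by
        funext t'; rw [hg₁, hη]; ring_nf
      rw [this, deriv_exp_lin]; ring_nf
    rw [h1, deriv_mul_exp_lin, hG]; ring_nf
  -- derivatives of f
  have hfx : deriv (fun x' => f x' t) x = a * (K * E) := by
    have : (fun x' : ℝ => f x' t)
        = fun x' : ℝ => 1 + a * Complex.exp (K * x' + (M * t + N)) := by
      funext x'; rw [hf, hconj, hη, hK, hM, hN]; ring_nf
    rw [this, deriv_one_add_mul_exp_lin, hE]; ring_nf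
  have hft : deriv (fun t' => f x t') t = a * (M * E) := by
    have : (fun t' : ℝ => f x t')
        = fun t' : ℝ => 1 + a * Complex.exp (M * t' + (K * x + N)) := by
      funext t'; rw [hf, hconj, hη, hK, hM, hN]; ring_nf
    rw [this, deriv_one_add_mul_exp_lin, hE]; ring_nf
  have hfxt : deriv (fun x' => deriv (fun t' => f x' t') t) x = a * (K * M * E) := by
    have h1 : (fun x' : ℝ => deriv (fun t' => f x' t') t)
        = fun x' : ℝ => (a * M) * Complex.exp (K * x' + (M * t + N)) := by
      funext x'
      have : (fun t' : ℝ => f x' t')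
          = fun t' : ℝ => 1 + a * Complex.exp (M * t' + (K * x' + N)) := by
        funext t'; rw [hf, hconj, hη, hK, hM, hN]; ring_nf
      rw [this, deriv_one_add_mul_exp_lin]; ring_nf
    rw [h1, deriv_mul_exp_lin, hE]; ring_nf
  -- assemble
  rw [hirotaDxDt, hgval, hfval, hgx, hgt, hgxt, hfx, hft, hfxt]
  have key : (starRingEnd ℂ) k₁ * (starRingEnd ℂ) c = ((μ + lam : ℝ) : ℂ) := by
    rw [← map_mul, hkc, Complex.conj_ofReal]
  have : k₁ * c * G * (1 + a * E) - k₁ * G * (a * (M * E)) - c * G * (a * (K * E))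
      + G * (a * (K * M * E)) = ((μ + lam : ℝ) : ℂ) * G * (1 + a * E) := by
    have h2 : (k₁ - K) * (c - M) = (starRingEnd ℂ) k₁ * (starRingEnd ℂ) c := by
      rw [hK, hM]; ring
    have h3 : (k₁ - K) * (c - M) = ((μ + lam : ℝ) : ℂ) := h2.trans key
    calc k₁ * c * G * (1 + a * E) - k₁ * G * (a * (M * E)) - c * G * (a * (K * E))
          + G * (a * (K * M * E))
        = k₁ * c * G + a * E * G * ((k₁ - K) * (c - M)) := by ring
      _ = ((μ + lam : ℝ) : ℂ) * G + a * E * G * ((μ + lam : ℝ) : ℂ) := by rw [hkc, h3]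
      _ = ((μ + lam : ℝ) : ℂ) * G * (1 + a * E) := by ring
  linear_combination this
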